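/- arXiv:1205.5952 — 2 statements merged into one kernel-verified Lean document; each statement's English description precedes it below -/
import Mathlib

section
/- Let 𝔤 be a skew-symmetric algebra and L : 𝔤 → ℝ smooth. For smooth curves a, h, f, Δf : [t₀,t₁] → 𝔤 with f, h, Δf vanishing at the endpoints, define J[a,h,f] := [[a,h],f] − [a,[h,f]] + [h,[a,f]] (the Jacobiator). Then the difference of the two iterated variations of the action satisfies δ²S_L(γ)(η,ξ) − δ²S_L(γ)(ξ,η) = ∫_{t₀}^{t₁} ⟨dL(a(t)), J[a(t), h(t), f(t)]⟩ dt, where δ²S_L(γ)(η,ξ) := ∫ d_T² L applied to the curve (a, ḟ+[a,f], ḣ+[a,h], Δḟ + [ḣ+[a,h], f] + [a, Δf]). In particular, if 𝔤 is a Lie algebra the second variation is symmetric. -/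
/-- The second tangent lift `d_T²L` of a Lagrangian `L`, evaluated on a quadruple
`(y, ẏ, δy, δẏ)`: it equals `⟨dL(y), δẏ⟩ + d²L(y)(δy, ẏ)`. -/
noncomputable def dT2 {V : Type*} [NormedAddCommGroup V] [NormedSpace ℝ V]
    (L : V → ℝ) (y ydot δy δydot : V) : ℝ :=
  fderiv ℝ L y δydot + (fderiv ℝ (fderiv ℝ L) y δy) ydot

/-- The Jacobiator `J(a,h,f) = [[a,h],f] − [a,[h,f]] + [h,[a,f]]`. -/
def jacobiator {V : Type*} [AddCommGroup V] [Module ℝ V]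
    (br : V →ₗ[ℝ] V →ₗ[ℝ] V) (a h f : V) : V :=
  br (br a h) f - br a (br h f) + br h (br a f)

/-- For a Lagrangian `L` on a skew-symmetric algebra `𝔤`, the difference of the two
iterated variations of the action equals the integral of `⟨dL(a(t)), J(a,h,f)(t)⟩`,
where `J` is the Jacobiator. In particular, for a Lie algebra the second variation
is symmetric. -/
theorem stmt6 {V : Type*} [NormedAddCommGroup V] [NormedSpace ℝ V]
    [FiniteDimensional ℝ V]
    (br : V →ₗ[ℝ] V →ₗ[ℝ] V)
    (hskew : ∀ x y : V, br x y = - br y x)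
    (L : V → ℝ) (hL : ContDiff ℝ 2 L)
    (t₀ t₁ : ℝ) (hle : t₀ ≤ t₁)
    (a h f Δf : ℝ → V)
    (ha : ContDiff ℝ 2 a) (hh : ContDiff ℝ 2 h) (hf : ContDiff ℝ 2 f)
    (hΔf : ContDiff ℝ 2 Δf)
    (hf0 : f t₀ = 0) (hf1 : f t₁ = 0)
    (hh0 : h t₀ = 0) (hh1 : h t₁ = 0)
    (hΔf0 : Δf t₀ = 0) (hΔf1 : Δf t₁ = 0) :
    (∫ t in t₀..t₁,
        dT2 L (a t) (deriv f t + br (a t) (f t)) (deriv h t + br (a t) (h t))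
          (deriv Δf t + br (deriv h t + br (a t) (h t)) (f t) + br (a t) (Δf t)))
      -
    (∫ t in t₀..t₁,
        dT2 L (a t) (deriv h t + br (a t) (h t)) (deriv f t + br (a t) (f t))
          (deriv Δf t + br (deriv h t) (f t) + br (h t) (deriv f t)
            + br (deriv f t + br (a t) (f t)) (h t)
            + br (a t) (Δf t + br (h t) (f t))))
      =
    ∫ t in t₀..t₁, fderiv ℝ L (a t) (jacobiator br (a t) (h t) (f t)) := by
  -- a continuous version of the bilinear bracket
  set brC : V →L[ℝ] V →L[ℝ] V :=
    LinearMap.toContinuousLinearMap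
      ((LinearMap.toContinuousLinearMap : (V →ₗ[ℝ] V) ≃ₗ[ℝ] (V →L[ℝ] V)).toLinearMap ∘ₗ br)
    with hbrC
  have hbr : ∀ x y : V, br x y = brC x y := by intro x y; simp [hbrC]
  -- continuity facts
  have hca := ha.continuous
  have hcf := hf.continuous
  have hch := hh.continuous
  have hcΔf := hΔf.continuous
  have hdf : Continuous (deriv f) := hf.continuous_deriv (by norm_num)
  have hdh : Continuous (deriv h) := hh.continuous_deriv (by norm_num)
  have hdΔf : Continuous (deriv Δf) := hΔf.continuous_deriv (by norm_num)
  have hdL : Continuous (fun t => fderiv ℝ L (a t)) :=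
    (hL.continuous_fderiv (by norm_num)).comp hca
  have hd2L : Continuous (fun t => fderiv ℝ (fderiv ℝ L) (a t)) :=
    ((hL.fderiv_right (m := 1) (by norm_num)).continuous_fderiv one_ne_zero).comp hca
  have hB : ∀ {x y : ℝ → V}, Continuous x → Continuous y →
      Continuous (fun t => br (x t) (y t)) := by
    intro x y hx hy
    simp only [hbr]
    exact (brC.continuous.comp hx).clm_apply hy
  -- continuity of the three integrands
  have hc1 : Continuous (fun t =>
      dT2 L (a t) (deriv f t + br (a t) (f t)) (deriv h t + br (a t) (h t))
        (deriv Δf t + br (deriv h t + br (a t) (h t)) (f t) + br (a t) (Δf t))) := by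
    unfold dT2
    exact (hdL.clm_apply ((hdΔf.add (hB (hdh.add (hB hca hch)) hcf)).add
        (hB hca hcΔf))).add
      ((hd2L.clm_apply (hdh.add (hB hca hch))).clm_apply (hdf.add (hB hca hcf)))
  have hc2 : Continuous (fun t =>
      dT2 L (a t) (deriv h t + br (a t) (h t)) (deriv f t + br (a t) (f t))
        (deriv Δf t + br (deriv h t) (f t) + br (h t) (deriv f t)
          + br (deriv f t + br (a t) (f t)) (h t)
          + br (a t) (Δf t + br (h t) (f t)))) := by
    unfold dT2
    exact (hdL.clm_apply ((((hdΔf.add (hB hdh hcf)).add (hB hch hdf)).add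
        (hB (hdf.add (hB hca hcf)) hch)).add (hB hca (hcΔf.add (hB hch hcf))))).add
      ((hd2L.clm_apply (hdf.add (hB hca hcf))).clm_apply (hdh.add (hB hca hch)))
  have hi1 := hc1.intervalIntegrable (μ := MeasureTheory.volume) t₀ t₁
  have hi2 := hc2.intervalIntegrable (μ := MeasureTheory.volume) t₀ t₁
  rw [← intervalIntegral.integral_sub hi1 hi2]
  refine intervalIntegral.integral_congr (fun t _ => ?_)
  have hsymm : ∀ v w, fderiv ℝ (fderiv ℝ L) (a t) v w = fderiv ℝ (fderiv ℝ L) (a t) w v :=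
    (hL.contDiffAt.isSymmSndFDerivAt (by norm_num))
  simp only [dT2, jacobiator, map_add, map_sub, map_neg, LinearMap.add_apply,
    LinearMap.sub_apply, LinearMap.neg_apply, ContinuousLinearMap.add_apply,
    ContinuousLinearMap.neg_apply, hskew (deriv f t) (h t), hskew (br (a t) (f t)) (h t),
    hsymm (deriv h t) (deriv f t), hsymm (deriv h t) (br (a t) (f t)),
    hsymm (br (a t) (h t)) (deriv f t), hsymm (br (a t) (h t)) (br (a t) (f t))]
  ring
end

section
/- Let Q, S, N be finite-dimensional real vector spaces (chart models), F : Q → ℝ a C² function, p : Q → N a C² map, and P = Dp : Q → L(Q,S) with S = N (so P(q) = Dp(q)). Suppose q ∈ Q is a critical point of F relative to P, i.e. DF(q) X = 0 for all X ∈ ker Dp(q). Then for X ∈ Q and Y ∈ ker Dp(q), and any C² homotopy q(s₁,s₂) with q(0,0)=q, ∂_{s₁}q(0,0)=X, ∂_{s₂}q(0,0)=Y, and ∂_{s₁}∂_{s₂}p(q(s₁,s₂))|_{(0,0)} = 0, the value ∂_{s₁}∂_{s₂}F(q(s₁,s₂))|_{(0,0)} is independent of the choice of such a homotopy and depends bilinearly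 on (X,Y). -/
lemma factor_through {Q N : Type*} [AddCommGroup Q] [Module ℝ Q]
    [AddCommGroup N] [Module ℝ N]
    (f : Q →ₗ[ℝ] ℝ) (g : Q →ₗ[ℝ] N) (h : ∀ x, g x = 0 → f x = 0) :
    ∃ l : N →ₗ[ℝ] ℝ, ∀ x, l (g x) = f x := by
  obtain ⟨r, hr⟩ := g.rangeRestrict.exists_rightInverse_of_surjective g.range_rangeRestrict
  obtain ⟨l, hl⟩ := LinearMap.exists_extend (f ∘ₗ r)
  refine ⟨l, fun x => ?_⟩
  have hx : g x ∈ LinearMap.range g := ⟨x, rfl⟩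
  have h1 : l (g x) = f (r ⟨g x, hx⟩) := LinearMap.congr_fun hl ⟨g x, hx⟩
  have h2 : g.rangeRestrict (r ⟨g x, hx⟩) = ⟨g x, hx⟩ := LinearMap.congr_fun hr _
  have h3 : g (r ⟨g x, hx⟩) = g x := congrArg Subtype.val h2
  have h4 : g (r ⟨g x, hx⟩ - x) = 0 := by rw [map_sub, h3, sub_self]
  have h5 := h _ h4
  rw [map_sub] at h5
  rw [h1]
  linarith [h5]

lemma mixed_deriv {Q E : Type*} [NormedAddCommGroup Q] [NormedSpace ℝ Q]
    [NormedAddCommGroup E] [NormedSpace ℝ E]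
    (G : Q → E) (hG : ContDiff ℝ 2 G) (γ : ℝ × ℝ → Q) (hγ : ContDiff ℝ 2 γ) :
    deriv (fun s₁ => deriv (fun s₂ => G (γ (s₁, s₂))) 0) 0
      = fderiv ℝ (fderiv ℝ G) (γ (0, 0)) (fderiv ℝ γ (0, 0) (1, 0)) (fderiv ℝ γ (0, 0) (0, 1))
        + fderiv ℝ G (γ (0, 0)) (fderiv ℝ (fderiv ℝ γ) (0, 0) (1, 0) (0, 1)) := by
  have hGd : Differentiable ℝ G := hG.differentiable two_ne_zero
  have hγd : Differentiable ℝ γ := hγ.differentiable two_ne_zero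
  have hG1 : ContDiff ℝ 1 (fderiv ℝ G) := hG.fderiv_right (by norm_num)
  have hγ1 : ContDiff ℝ 1 (fderiv ℝ γ) := hγ.fderiv_right (by norm_num)
  have hcurve2 : ∀ s₁ : ℝ, HasDerivAt (fun s₂ : ℝ => ((s₁, s₂) : ℝ × ℝ)) (0, 1) 0 :=
    fun s₁ => HasDerivAt.prodMk (hasDerivAt_const (0 : ℝ) s₁) (hasDerivAt_id (0 : ℝ))
  have hcurve1 : HasDerivAt (fun s₁ : ℝ => ((s₁, 0) : ℝ × ℝ)) (1, 0) 0 :=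
    HasDerivAt.prodMk (hasDerivAt_id (0 : ℝ)) (hasDerivAt_const (0 : ℝ) (0 : ℝ))
  have hinner : ∀ s₁ : ℝ, deriv (fun s₂ => G (γ (s₁, s₂))) 0
      = fderiv ℝ G (γ (s₁, 0)) (fderiv ℝ γ (s₁, 0) (0, 1)) := by
    intro s₁
    have h1 : HasDerivAt (fun s₂ : ℝ => γ (s₁, s₂)) (fderiv ℝ γ (s₁, 0) (0, 1)) 0 :=
      (hγd (s₁, 0)).hasFDerivAt.comp_hasDerivAt 0 (hcurve2 s₁)
    exact ((hGd (γ (s₁, 0))).hasFDerivAt.comp_hasDerivAt 0 h1).deriv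
  rw [funext hinner]
  have hc1 : HasDerivAt (fun s₁ : ℝ => γ (s₁, 0)) (fderiv ℝ γ (0, 0) (1, 0)) 0 :=
    (hγd (0, 0)).hasFDerivAt.comp_hasDerivAt_of_eq 0 hcurve1 rfl
  have hc : HasDerivAt (fun s₁ : ℝ => fderiv ℝ G (γ (s₁, 0)))
      (fderiv ℝ (fderiv ℝ G) (γ (0, 0)) (fderiv ℝ γ (0, 0) (1, 0))) 0 :=
    (hG1.differentiable one_ne_zero (γ (0, 0))).hasFDerivAt.comp_hasDerivAt_of_eq 0 hc1 rfl
  have hu0 : HasDerivAt (fun s₁ : ℝ => fderiv ℝ γ (s₁, 0))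
      (fderiv ℝ (fderiv ℝ γ) (0, 0) (1, 0)) 0 :=
    (hγ1.differentiable one_ne_zero (0, 0)).hasFDerivAt.comp_hasDerivAt_of_eq 0 hcurve1 rfl
  have hu : HasDerivAt (fun s₁ : ℝ => fderiv ℝ γ (s₁, 0) (0, 1))
      (fderiv ℝ (fderiv ℝ γ) (0, 0) (1, 0) (0, 1)) 0 := by
    simpa using hu0.clm_apply (hasDerivAt_const 0 ((0, 1) : ℝ × ℝ))
  simpa using (hc.clm_apply hu).deriv

lemma curve_deriv1 {Q : Type*} [NormedAddCommGroup Q] [NormedSpace ℝ Q]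
    (γ : ℝ × ℝ → Q) (hγ : ContDiff ℝ 2 γ) :
    deriv (fun s₁ => γ (s₁, 0)) 0 = fderiv ℝ γ (0, 0) (1, 0) := by
  have h : HasDerivAt (fun s₁ : ℝ => γ (s₁, 0)) (fderiv ℝ γ (0, 0) (1, 0)) 0 :=
    (hγ.differentiable two_ne_zero (0, 0)).hasFDerivAt.comp_hasDerivAt_of_eq 0
      (HasDerivAt.prodMk (hasDerivAt_id (0 : ℝ)) (hasDerivAt_const (0 : ℝ) (0 : ℝ))) rfl
  exact h.deriv

lemma curve_deriv2 {Q : Type*} [NormedAddCommGroup Q] [NormedSpace ℝ Q]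
    (γ : ℝ × ℝ → Q) (hγ : ContDiff ℝ 2 γ) :
    deriv (fun s₂ => γ (0, s₂)) 0 = fderiv ℝ γ (0, 0) (0, 1) := by
  have h : HasDerivAt (fun s₂ : ℝ => γ (0, s₂)) (fderiv ℝ γ (0, 0) (0, 1)) 0 :=
    (hγ.differentiable two_ne_zero (0, 0)).hasFDerivAt.comp_hasDerivAt_of_eq 0
      (HasDerivAt.prodMk (hasDerivAt_const (0 : ℝ) (0 : ℝ)) (hasDerivAt_id (0 : ℝ))) rfl
  exact h.deriv

/-- Let `q` be a critical point of `F : Q → ℝ` relative to `P = Dp`, i.e. `DF(q)`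
vanishes on `ker Dp(q)`. Then for `X ∈ Q` and `Y ∈ ker Dp(q)`, the value
`∂_{s₁}∂_{s₂} F(q(s₁,s₂))|_{(0,0)}` along any C² homotopy with `q(0,0) = q`,
`∂_{s₁}q(0,0) = X`, `∂_{s₂}q(0,0) = Y` and vanishing mixed second derivative of
`p ∘ q`, is independent of the homotopy and depends bilinearly on `(X,Y)`. -/
theorem stmt12 {Q N : Type*} [NormedAddCommGroup Q] [NormedSpace ℝ Q]
    [FiniteDimensional ℝ Q] [NormedAddCommGroup N] [NormedSpace ℝ N]
    [FiniteDimensional ℝ N]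
    (F : Q → ℝ) (hF : ContDiff ℝ 2 F)
    (p : Q → N) (hp : ContDiff ℝ 2 p)
    (q : Q)
    (hcrit : ∀ X : Q, fderiv ℝ p q X = 0 → fderiv ℝ F q X = 0) :
    ∃ B : Q →ₗ[ℝ] Q →ₗ[ℝ] ℝ,
      ∀ (X Y : Q), fderiv ℝ p q Y = 0 →
        ∀ γ : ℝ × ℝ → Q, ContDiff ℝ 2 γ → γ (0, 0) = q →
          deriv (fun s₁ => γ (s₁, 0)) 0 = X →
          deriv (fun s₂ => γ (0, s₂)) 0 = Y →
          deriv (fun s₁ => deriv (fun s₂ => p (γ (s₁, s₂))) 0) 0 = 0 →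
          deriv (fun s₁ => deriv (fun s₂ => F (γ (s₁, s₂))) 0) 0 = B X Y := by
  obtain ⟨l, hl⟩ := factor_through (fderiv ℝ F q : Q →ₗ[ℝ] ℝ)
    ((fderiv ℝ p q : Q →L[ℝ] N) : Q →ₗ[ℝ] N) hcrit
  refine ⟨LinearMap.mk₂ ℝ
      (fun X Y => fderiv ℝ (fderiv ℝ F) q X Y - l (fderiv ℝ (fderiv ℝ p) q X Y))
      (fun m₁ m₂ n => by simp; ring)
      (fun c m n => by simp; ring)
      (fun m n₁ n₂ => by simp; ring)
      (fun c m n => by simp; ring), ?_⟩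
  intro X Y hY γ hγ hγ0 hX hYd hpmix
  have hXeq : fderiv ℝ γ (0, 0) (1, 0) = X := by rw [← hX, curve_deriv1 γ hγ]
  have hYeq : fderiv ℝ γ (0, 0) (0, 1) = Y := by rw [← hYd, curve_deriv2 γ hγ]
  have hmp := mixed_deriv p hp γ hγ
  rw [hpmix, hγ0, hXeq, hYeq] at hmp
  have hpZ : fderiv ℝ p q (fderiv ℝ (fderiv ℝ γ) (0, 0) (1, 0) (0, 1))
      = -(fderiv ℝ (fderiv ℝ p) q X Y) :=
    neg_eq_of_add_eq_zero_right hmp.symm |>.symm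
  have hFZ : fderiv ℝ F q (fderiv ℝ (fderiv ℝ γ) (0, 0) (1, 0) (0, 1))
      = - l (fderiv ℝ (fderiv ℝ p) q X Y) := by
    have := hl (fderiv ℝ (fderiv ℝ γ) (0, 0) (1, 0) (0, 1))
    simp only [ContinuousLinearMap.coe_coe] at this
    rw [← this, hpZ, map_neg]
  have hmF := mixed_deriv F hF γ hγ
  rw [hγ0, hXeq, hYeq] at hmF
  rw [hmF, hFZ]
  simp [sub_eq_add_neg]
end
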